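/- arXiv:2601.23078 — 2 statements merged into one kernel-verified Lean document; each statement's English description precedes it below -/
import Mathlib

section
/- Let L ⊆ ℝ^d be countable with the polynomial ball-counting property |B_r(z) ∩ L| ≤ C r^γ for all r ≥ r₀, z ∈ L. If λ > 1 + γ, then the function F(r) = (1 + r)^{−λ} satisfies the convolution estimate: there exists C_F ≥ 0 such that for all x, y ∈ L, ∑_{z ∈ L} F(|x − z|) · F(|z − y|) ≤ C_F · F(|x − y|). -/
/-- Uniform summability: `∑_{z∈L} (1+dist z y)^{-λ} ≤ S` for all `y ∈ L`. -/
theorem aux_uniform_sum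
    {d : ℕ} (L : Set (EuclideanSpace ℝ (Fin d)))
    (C γ r₀ : ℝ) (hC : 0 ≤ C) (hγ : 0 < γ) (hr₀ : 0 < r₀)
    (hcount : ∀ r : ℝ, r₀ ≤ r → ∀ z ∈ L, (L ∩ Metric.ball z r).Finite ∧
      ((L ∩ Metric.ball z r).ncard : ℝ) ≤ C * r ^ γ)
    (lam : ℝ) (hlam : 1 + γ < lam) :
    ∃ S : ℝ, 0 ≤ S ∧ ∀ y ∈ L,
      Summable (fun z : L => (1 + dist (z : EuclideanSpace ℝ (Fin d)) y) ^ (-lam)) ∧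
      ∑' z : L, (1 + dist (z : EuclideanSpace ℝ (Fin d)) y) ^ (-lam) ≤ S := by
  classical
  have hlam0 : (0 : ℝ) ≤ lam := by linarith
  set R : ℝ := max r₀ 1 with hR
  have hR1 : (1 : ℝ) ≤ R := le_max_right _ _
  have hR0 : (0 : ℝ) < R := lt_of_lt_of_le one_pos hR1
  have hRr₀ : r₀ ≤ R := le_max_left _ _
  have hsumk : Summable (fun k : ℕ => ((k : ℝ) + 1) ^ (γ - lam)) := by
    have h : Summable (fun k : ℕ => ((k : ℝ)) ^ (γ - lam)) := by
      rw [Real.summable_nat_rpow]; linarith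
    have h2 := (summable_nat_add_iff 1).mpr h
    refine h2.congr fun k => ?_
    push_cast
    ring_nf
  set T : ℝ := ∑' k : ℕ, ((k : ℝ) + 1) ^ (γ - lam) with hT
  have hT0 : 0 ≤ T := tsum_nonneg fun k => Real.rpow_nonneg (by positivity) _
  have hRγ : (0 : ℝ) ≤ R ^ γ := Real.rpow_nonneg hR0.le _
  refine ⟨C * R ^ γ * T, by positivity, ?_⟩
  intro y hy
  have key : ∀ u : Finset L,
      ∑ z ∈ u, (1 + dist (z : EuclideanSpace ℝ (Fin d)) y) ^ (-lam) ≤ C * R ^ γ * T := by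
    intro u
    set g : L → ℕ := fun z => ⌊dist (z : EuclideanSpace ℝ (Fin d)) y / R⌋₊ with hg
    have hmaps : ∀ z ∈ u, g z ∈ u.image g := fun z hz => Finset.mem_image_of_mem g hz
    rw [← Finset.sum_fiberwise_of_maps_to hmaps]
    have hfiber : ∀ k ∈ u.image g,
        ∑ z ∈ u.filter (fun z => g z = k),
            (1 + dist (z : EuclideanSpace ℝ (Fin d)) y) ^ (-lam)
          ≤ C * R ^ γ * ((k : ℝ) + 1) ^ (γ - lam) := by
      intro k _
      have hk1 : (0 : ℝ) < (k : ℝ) + 1 := by positivity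
      have hr : r₀ ≤ R * ((k : ℝ) + 1) := by
        refine le_trans hRr₀ ?_
        nlinarith [Nat.cast_nonneg (α := ℝ) k]
      obtain ⟨hfin, hle⟩ := hcount (R * ((k : ℝ) + 1)) hr y hy
      -- cardinality bound for the fiber
      have hcard : ((u.filter (fun z => g z = k)).card : ℝ) ≤ C * (R * ((k : ℝ) + 1)) ^ γ := by
        have hinj : (u.filter (fun z => g z = k)).card
            = (((u.filter (fun z => g z = k)).image (Subtype.val)) : Finset
                (EuclideanSpace ℝ (Fin d))).card :=
          (Finset.card_image_of_injective _ Subtype.val_injective).symm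
        have hsub : (((u.filter (fun z => g z = k)).image (Subtype.val) :
            Finset (EuclideanSpace ℝ (Fin d))) : Set (EuclideanSpace ℝ (Fin d)))
            ⊆ L ∩ Metric.ball y (R * ((k : ℝ) + 1)) := by
          intro w hw
          simp only [Finset.coe_image, Set.mem_image, Finset.mem_coe,
            Finset.mem_filter] at hw
          obtain ⟨z, ⟨_, hzk⟩, rfl⟩ := hw
          refine ⟨z.2, ?_⟩
          rw [Metric.mem_ball]
          have hlt : dist (z : EuclideanSpace ℝ (Fin d)) y / R < (k : ℝ) + 1 := by
            have := Nat.lt_floor_add_one (dist (z : EuclideanSpace ℝ (Fin d)) y / R)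
            rw [hg] at hzk
            simpa [hzk] using this
          calc dist (z : EuclideanSpace ℝ (Fin d)) y
              = (dist (z : EuclideanSpace ℝ (Fin d)) y / R) * R := by
                field_simp
            _ < ((k : ℝ) + 1) * R := by
                exact mul_lt_mul_of_pos_right hlt hR0
            _ = R * ((k : ℝ) + 1) := by ring
        have hcard2 : (((u.filter (fun z => g z = k)).image (Subtype.val)) : Finset
            (EuclideanSpace ℝ (Fin d))).card
            ≤ (L ∩ Metric.ball y (R * ((k : ℝ) + 1))).ncard := by
          rw [← Set.ncard_coe_finset]
          exact Set.ncard_le_ncard hsub hfin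
        rw [hinj]
        exact le_trans (by exact_mod_cast hcard2) hle
      -- term bound on the fiber
      have hterm : ∀ z ∈ u.filter (fun z => g z = k),
          (1 + dist (z : EuclideanSpace ℝ (Fin d)) y) ^ (-lam) ≤ ((k : ℝ) + 1) ^ (-lam) := by
        intro z hz
        rw [Finset.mem_filter] at hz
        have hzk := hz.2
        have hdR : (k : ℝ) ≤ dist (z : EuclideanSpace ℝ (Fin d)) y / R := by
          rw [hg] at hzk
          rw [← hzk]
          exact Nat.floor_le (by positivity)
        have hd : (k : ℝ) ≤ dist (z : EuclideanSpace ℝ (Fin d)) y := by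
          have h1 : (k : ℝ) * 1 ≤ (dist (z : EuclideanSpace ℝ (Fin d)) y / R) * R := by
            apply mul_le_mul hdR hR1 one_pos.le
            exact le_trans (Nat.cast_nonneg k) hdR
          rw [div_mul_cancel₀ _ hR0.ne'] at h1
          linarith
        have hbase : (k : ℝ) + 1 ≤ 1 + dist (z : EuclideanSpace ℝ (Fin d)) y := by linarith
        rw [Real.rpow_neg hk1.le, Real.rpow_neg (by positivity)]
        apply inv_anti₀ (Real.rpow_pos_of_pos hk1 lam)
        exact Real.rpow_le_rpow hk1.le hbase hlam0
      calc ∑ z ∈ u.filter (fun z => g z = k),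
              (1 + dist (z : EuclideanSpace ℝ (Fin d)) y) ^ (-lam)
          ≤ ∑ _z ∈ u.filter (fun z => g z = k), ((k : ℝ) + 1) ^ (-lam) :=
            Finset.sum_le_sum hterm
        _ = ((u.filter (fun z => g z = k)).card : ℝ) * ((k : ℝ) + 1) ^ (-lam) := by
            rw [Finset.sum_const, nsmul_eq_mul]
        _ ≤ (C * (R * ((k : ℝ) + 1)) ^ γ) * ((k : ℝ) + 1) ^ (-lam) := by
            exact mul_le_mul_of_nonneg_right hcard (Real.rpow_nonneg hk1.le _)
        _ = C * R ^ γ * ((k : ℝ) + 1) ^ (γ - lam) := by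
            rw [Real.mul_rpow hR0.le hk1.le,
              show γ - lam = γ + (-lam) by ring, Real.rpow_add hk1]
            ring
    calc ∑ k ∈ u.image g, ∑ z ∈ u.filter (fun z => g z = k),
            (1 + dist (z : EuclideanSpace ℝ (Fin d)) y) ^ (-lam)
        ≤ ∑ k ∈ u.image g, C * R ^ γ * ((k : ℝ) + 1) ^ (γ - lam) :=
          Finset.sum_le_sum hfiber
      _ = C * R ^ γ * ∑ k ∈ u.image g, ((k : ℝ) + 1) ^ (γ - lam) := by
          rw [Finset.mul_sum]
      _ ≤ C * R ^ γ * T := by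
          apply mul_le_mul_of_nonneg_left _ (by positivity)
          exact Summable.sum_le_tsum _ (fun k _ => Real.rpow_nonneg (by positivity) _) hsumk
  have hnn : 0 ≤ fun z : L => (1 + dist (z : EuclideanSpace ℝ (Fin d)) y) ^ (-lam) := by
    intro z
    exact Real.rpow_nonneg (by positivity) _
  have hs : Summable (fun z : L => (1 + dist (z : EuclideanSpace ℝ (Fin d)) y) ^ (-lam)) :=
    summable_of_sum_le hnn key
  exact ⟨hs, Summable.tsum_le_of_sum_le hs key⟩

theorem convolution_Ffunction_estimate
    {d : ℕ} (L : Set (EuclideanSpace ℝ (Fin d))) (hLc : L.Countable)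
    (C γ r₀ : ℝ) (hC : 0 ≤ C) (hγ : 0 < γ) (hr₀ : 0 < r₀)
    (hcount : ∀ r : ℝ, r₀ ≤ r → ∀ z ∈ L, (L ∩ Metric.ball z r).Finite ∧
      ((L ∩ Metric.ball z r).ncard : ℝ) ≤ C * r ^ γ)
    (lam : ℝ) (hlam : 1 + γ < lam) :
    ∃ C_F : ℝ, 0 ≤ C_F ∧ ∀ x ∈ L, ∀ y ∈ L,
      Summable (fun z : L =>
        (1 + dist x (z : EuclideanSpace ℝ (Fin d))) ^ (-lam) *
          (1 + dist (z : EuclideanSpace ℝ (Fin d)) y) ^ (-lam)) ∧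
      ∑' z : L, (1 + dist x (z : EuclideanSpace ℝ (Fin d))) ^ (-lam) *
          (1 + dist (z : EuclideanSpace ℝ (Fin d)) y) ^ (-lam)
        ≤ C_F * (1 + dist x y) ^ (-lam) := by
  obtain ⟨S, hS0, hS⟩ := aux_uniform_sum L C γ r₀ hC hγ hr₀ hcount lam hlam
  have hlam0 : (0 : ℝ) ≤ lam := by linarith
  have h2lam : (0 : ℝ) ≤ (2 : ℝ) ^ lam := Real.rpow_nonneg (by norm_num) _
  refine ⟨(2 : ℝ) ^ lam * (2 * S), by positivity, ?_⟩
  intro x hx y hy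
  obtain ⟨hsumx, hlex⟩ := hS x hx
  obtain ⟨hsumy, hley⟩ := hS y hy
  set c : ℝ := dist x y with hc
  have hc0 : 0 ≤ c := dist_nonneg
  have hc1 : (0 : ℝ) < 1 + c := by linarith
  set K : ℝ := (2 : ℝ) ^ lam * (1 + c) ^ (-lam) with hK
  have hK0 : 0 ≤ K := mul_nonneg h2lam (Real.rpow_nonneg hc1.le _)
  -- key pointwise estimate: if c/2 ≤ a then (1+a)^(-lam) ≤ K
  have hhalf : ∀ a : ℝ, 0 ≤ a → c / 2 ≤ a → (1 + a) ^ (-lam) ≤ K := by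
    intro a ha hca
    have ha1 : (0 : ℝ) < 1 + a := by linarith
    have hdiv : (1 + c) ^ lam / (2 : ℝ) ^ lam ≤ (1 + a) ^ lam := by
      rw [div_le_iff₀ (by positivity)]
      calc (1 + c) ^ lam ≤ ((2 : ℝ) * (1 + a)) ^ lam :=
            Real.rpow_le_rpow hc1.le (by linarith) hlam0
        _ = (2 : ℝ) ^ lam * (1 + a) ^ lam := Real.mul_rpow (by norm_num) ha1.le
        _ = (1 + a) ^ lam * (2 : ℝ) ^ lam := by ring
    have hinv := inv_anti₀ (by positivity) hdiv
    rw [inv_div] at hinv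
    rw [Real.rpow_neg ha1.le]
    calc ((1 + a) ^ lam)⁻¹ ≤ (2 : ℝ) ^ lam / (1 + c) ^ lam := hinv
      _ = K := by
          rw [hK, Real.rpow_neg hc1.le, div_eq_mul_inv]
  -- pointwise bound
  have hpt : ∀ z : L,
      (1 + dist x (z : EuclideanSpace ℝ (Fin d))) ^ (-lam) *
        (1 + dist (z : EuclideanSpace ℝ (Fin d)) y) ^ (-lam)
      ≤ K * ((1 + dist (z : EuclideanSpace ℝ (Fin d)) x) ^ (-lam) +
          (1 + dist (z : EuclideanSpace ℝ (Fin d)) y) ^ (-lam)) := by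
    intro z
    set a : ℝ := dist x (z : EuclideanSpace ℝ (Fin d)) with hadef
    set b : ℝ := dist (z : EuclideanSpace ℝ (Fin d)) y with hbdef
    have ha0 : 0 ≤ a := dist_nonneg
    have hb0 : 0 ≤ b := dist_nonneg
    have hFa : 0 ≤ (1 + a) ^ (-lam) := Real.rpow_nonneg (by linarith) _
    have hFb : 0 ≤ (1 + b) ^ (-lam) := Real.rpow_nonneg (by linarith) _
    have hzx : dist (z : EuclideanSpace ℝ (Fin d)) x = a := by
      rw [hadef, dist_comm]
    have htri : c ≤ a + b := dist_triangle x (z : EuclideanSpace ℝ (Fin d)) y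
    rcases le_or_gt (c / 2) a with h | h
    · have h1 : (1 + a) ^ (-lam) ≤ K := hhalf a ha0 h
      calc (1 + a) ^ (-lam) * (1 + b) ^ (-lam)
          ≤ K * (1 + b) ^ (-lam) := mul_le_mul_of_nonneg_right h1 hFb
        _ ≤ K * ((1 + dist (z : EuclideanSpace ℝ (Fin d)) x) ^ (-lam) + (1 + b) ^ (-lam)) := by
            rw [hzx]
            exact mul_le_mul_of_nonneg_left (le_add_of_nonneg_left hFa) hK0
    · have hcb : c / 2 ≤ b := by linarith
      have h1 : (1 + b) ^ (-lam) ≤ K := hhalf b hb0 hcb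
      calc (1 + a) ^ (-lam) * (1 + b) ^ (-lam)
          ≤ (1 + a) ^ (-lam) * K := mul_le_mul_of_nonneg_left h1 hFa
        _ = K * (1 + a) ^ (-lam) := by ring
        _ ≤ K * ((1 + dist (z : EuclideanSpace ℝ (Fin d)) x) ^ (-lam) + (1 + b) ^ (-lam)) := by
            rw [hzx]
            exact mul_le_mul_of_nonneg_left (le_add_of_nonneg_right hFb) hK0
  have hsumh : Summable (fun z : L =>
      K * ((1 + dist (z : EuclideanSpace ℝ (Fin d)) x) ^ (-lam) +
        (1 + dist (z : EuclideanSpace ℝ (Fin d)) y) ^ (-lam))) :=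
    (hsumx.add hsumy).mul_left K
  have hnn : ∀ z : L, 0 ≤ (1 + dist x (z : EuclideanSpace ℝ (Fin d))) ^ (-lam) *
      (1 + dist (z : EuclideanSpace ℝ (Fin d)) y) ^ (-lam) := fun z =>
    mul_nonneg (Real.rpow_nonneg (by positivity) _) (Real.rpow_nonneg (by positivity) _)
  have hsumg : Summable (fun z : L =>
      (1 + dist x (z : EuclideanSpace ℝ (Fin d))) ^ (-lam) *
        (1 + dist (z : EuclideanSpace ℝ (Fin d)) y) ^ (-lam)) :=
    Summable.of_nonneg_of_le hnn hpt hsumh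
  refine ⟨hsumg, ?_⟩
  calc ∑' z : L, (1 + dist x (z : EuclideanSpace ℝ (Fin d))) ^ (-lam) *
          (1 + dist (z : EuclideanSpace ℝ (Fin d)) y) ^ (-lam)
      ≤ ∑' z : L, K * ((1 + dist (z : EuclideanSpace ℝ (Fin d)) x) ^ (-lam) +
          (1 + dist (z : EuclideanSpace ℝ (Fin d)) y) ^ (-lam)) :=
        Summable.tsum_le_tsum hpt hsumg hsumh
    _ = K * ((∑' z : L, (1 + dist (z : EuclideanSpace ℝ (Fin d)) x) ^ (-lam)) +
          ∑' z : L, (1 + dist (z : EuclideanSpace ℝ (Fin d)) y) ^ (-lam)) := by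
        rw [tsum_mul_left, Summable.tsum_add hsumx hsumy]
    _ ≤ K * (S + S) := by
        apply mul_le_mul_of_nonneg_left _ hK0
        exact add_le_add hlex hley
    _ = (2 : ℝ) ^ lam * (2 * S) * (1 + c) ^ (-lam) := by
        rw [hK]; ring
end

section
/- Let L ⊆ ℝ^d be countable with |B_r(z) ∩ L| ≤ C r^γ for all r ≥ r₀, z ∈ L, and fix k ∈ ℕ, R₀ > 0, and λ > 4 + 2k + 2γ. Then sup over x ∈ L of ∑_{z ∈ L} ( ∑_{z' ∈ B_{R₀}(z) ∩ L} (1 + |x − z'|)^{−λ} )^{1/2} · |x − z|^{k+1} is finite. -/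
open Metric Real Set

private lemma uniform_decay_sum {d : ℕ} (L : Set (EuclideanSpace ℝ (Fin d)))
    (C γ r₀ : ℝ) (hC : 0 ≤ C) (hγ : 0 < γ) (hr₀ : 0 < r₀)
    (hcount : ∀ r : ℝ, r₀ ≤ r → ∀ z ∈ L, (L ∩ Metric.ball z r).Finite ∧
      ((L ∩ Metric.ball z r).ncard : ℝ) ≤ C * r ^ γ)
    (μ : ℝ) (hμ : γ + 1 < μ) :
    ∃ M₀ : ℝ, ∀ x ∈ L, ∀ u : Finset L,
      ∑ z ∈ u, (1 + dist x (z : EuclideanSpace ℝ (Fin d))) ^ (-μ) ≤ M₀ := by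
  have hc : (0:ℝ) ≤ C * (1 + r₀) ^ γ := by positivity
  have hs0 : Summable (fun n : ℕ => (n : ℝ) ^ (γ - μ)) :=
    Real.summable_nat_rpow.2 (by linarith)
  have hs : Summable (fun n : ℕ => ((n : ℝ) + 1) ^ (γ - μ)) := by
    have := (summable_nat_add_iff 1).2 hs0
    simpa [Nat.cast_add] using this
  refine ⟨C * (1 + r₀) ^ γ * ∑' n : ℕ, ((n : ℝ) + 1) ^ (γ - μ), fun x hx u => ?_⟩
  classical
  set f : L → ℝ := fun z => (1 + dist x (z : EuclideanSpace ℝ (Fin d))) ^ (-μ) with hf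
  set g : L → ℕ := fun z => ⌊dist x (z : EuclideanSpace ℝ (Fin d))⌋₊ with hg
  have hfib := Finset.sum_fiberwise_of_maps_to (s := u) (t := u.image g) (g := g)
    (fun z hz => Finset.mem_image_of_mem g hz) f
  rw [← hfib]
  have step1 : ∀ n ∈ u.image g,
      ∑ z ∈ u.filter (fun z => g z = n), f z
        ≤ C * (1 + r₀) ^ γ * ((n : ℝ) + 1) ^ (γ - μ) := by
    intro n _
    have hterm : ∀ z ∈ u.filter (fun z => g z = n), f z ≤ ((n : ℝ) + 1) ^ (-μ) := by
      intro z hz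
      have hgn : g z = n := (Finset.mem_filter.1 hz).2
      have hd : (n : ℝ) ≤ dist x (z : EuclideanSpace ℝ (Fin d)) := by
        rw [← hgn]; exact Nat.floor_le dist_nonneg
      exact rpow_le_rpow_of_nonpos (by positivity) (by linarith) (by linarith)
    have hcard : ((u.filter (fun z => g z = n)).card : ℝ) ≤ C * ((n : ℝ) + 1 + r₀) ^ γ := by
      have hr : r₀ ≤ (n : ℝ) + 1 + r₀ := by linarith [Nat.cast_nonneg (α := ℝ) n]
      obtain ⟨hfin, hnc⟩ := hcount ((n : ℝ) + 1 + r₀) hr x hx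
      have hsub : ((u.filter (fun z => g z = n)).image (Subtype.val) : Set (EuclideanSpace ℝ (Fin d)))
          ⊆ L ∩ Metric.ball x ((n : ℝ) + 1 + r₀) := by
        intro y hy
        simp only [Finset.coe_image, Set.mem_image, Finset.mem_coe, Finset.mem_filter] at hy
        obtain ⟨z, ⟨_, hgz⟩, rfl⟩ := hy
        refine ⟨z.2, ?_⟩
        rw [Metric.mem_ball, dist_comm]
        have : dist x (z : EuclideanSpace ℝ (Fin d)) < (g z : ℝ) + 1 :=
          Nat.lt_floor_add_one _
        rw [hgz] at this
        linarith
      have h1 : (u.filter (fun z => g z = n)).card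
          = ((u.filter (fun z => g z = n)).image (Subtype.val)).card :=
        (Finset.card_image_of_injective _ Subtype.val_injective).symm
      have h2 : (((u.filter (fun z => g z = n)).image (Subtype.val) : Set (EuclideanSpace ℝ (Fin d))).ncard)
          ≤ (L ∩ Metric.ball x ((n : ℝ) + 1 + r₀)).ncard :=
        Set.ncard_le_ncard hsub hfin
      rw [Set.ncard_coe_finset] at h2
      calc ((u.filter (fun z => g z = n)).card : ℝ)
          ≤ ((L ∩ Metric.ball x ((n : ℝ) + 1 + r₀)).ncard : ℝ) := by
            rw [h1]; exact_mod_cast h2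
        _ ≤ C * ((n : ℝ) + 1 + r₀) ^ γ := hnc
    calc ∑ z ∈ u.filter (fun z => g z = n), f z
        ≤ (u.filter (fun z => g z = n)).card • (((n : ℝ) + 1) ^ (-μ)) :=
          Finset.sum_le_card_nsmul _ _ _ hterm
      _ = ((u.filter (fun z => g z = n)).card : ℝ) * ((n : ℝ) + 1) ^ (-μ) := by
          rw [nsmul_eq_mul]
      _ ≤ (C * ((n : ℝ) + 1 + r₀) ^ γ) * ((n : ℝ) + 1) ^ (-μ) :=
          mul_le_mul_of_nonneg_right hcard (by positivity)
      _ ≤ (C * ((1 + r₀) * ((n : ℝ) + 1)) ^ γ) * ((n : ℝ) + 1) ^ (-μ) := by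
          have hb : (n : ℝ) + 1 + r₀ ≤ (1 + r₀) * ((n : ℝ) + 1) := by nlinarith [Nat.cast_nonneg (α := ℝ) n]
          have := rpow_le_rpow (by positivity) hb hγ.le
          have h3 : C * ((n : ℝ) + 1 + r₀) ^ γ ≤ C * ((1 + r₀) * ((n : ℝ) + 1)) ^ γ :=
            mul_le_mul_of_nonneg_left this hC
          exact mul_le_mul_of_nonneg_right h3 (by positivity)
      _ = C * (1 + r₀) ^ γ * ((n : ℝ) + 1) ^ (γ - μ) := by
          rw [mul_rpow (by positivity) (by positivity), show γ - μ = γ + (-μ) by ring,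
            rpow_add (by positivity)]
          ring
  calc ∑ n ∈ u.image g, ∑ z ∈ u.filter (fun z => g z = n), f z
      ≤ ∑ n ∈ u.image g, C * (1 + r₀) ^ γ * ((n : ℝ) + 1) ^ (γ - μ) :=
        Finset.sum_le_sum step1
    _ = C * (1 + r₀) ^ γ * ∑ n ∈ u.image g, ((n : ℝ) + 1) ^ (γ - μ) := by
        rw [Finset.mul_sum]
    _ ≤ C * (1 + r₀) ^ γ * ∑' n : ℕ, ((n : ℝ) + 1) ^ (γ - μ) :=
        mul_le_mul_of_nonneg_left (Summable.sum_le_tsum _ (fun n _ => by positivity) hs) hc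
theorem nested_sum_decay_condition
    {d : ℕ} (L : Set (EuclideanSpace ℝ (Fin d))) (hLc : L.Countable)
    (C γ r₀ : ℝ) (hC : 0 ≤ C) (hγ : 0 < γ) (hr₀ : 0 < r₀)
    (hcount : ∀ r : ℝ, r₀ ≤ r → ∀ z ∈ L, (L ∩ Metric.ball z r).Finite ∧
      ((L ∩ Metric.ball z r).ncard : ℝ) ≤ C * r ^ γ)
    (k : ℕ) (R₀ : ℝ) (hR₀ : 0 < R₀)
    (lam : ℝ) (hlam : 4 + 2 * k + 2 * γ < lam) :
    (∀ x ∈ L, ∀ z ∈ L,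
      Summable (fun z' : ↥(L ∩ Metric.ball z R₀) =>
        (1 + dist x (z' : EuclideanSpace ℝ (Fin d))) ^ (-lam))) ∧
    (∀ x ∈ L, Summable (fun z : L =>
      (∑' z' : ↥(L ∩ Metric.ball (z : EuclideanSpace ℝ (Fin d)) R₀),
          (1 + dist x (z' : EuclideanSpace ℝ (Fin d))) ^ (-lam)) ^ ((1 : ℝ) / 2) *
        dist x (z : EuclideanSpace ℝ (Fin d)) ^ (k + 1))) ∧
    ∃ M : ℝ, ∀ x ∈ L,
      ∑' z : L,
        (∑' z' : ↥(L ∩ Metric.ball (z : EuclideanSpace ℝ (Fin d)) R₀),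
            (1 + dist x (z' : EuclideanSpace ℝ (Fin d))) ^ (-lam)) ^ ((1 : ℝ) / 2) *
          dist x (z : EuclideanSpace ℝ (Fin d)) ^ (k + 1) ≤ M := by
  classical
  have hk0 : (0:ℝ) ≤ (k:ℝ) := Nat.cast_nonneg k
  have hlam0 : 0 < lam := by linarith
  set r₁ : ℝ := max R₀ r₀ with hr₁
  have hr₁r₀ : r₀ ≤ r₁ := le_max_right _ _
  have hr₁R₀ : R₀ ≤ r₁ := le_max_left _ _
  -- finiteness of inner index sets
  have hfinS : ∀ z ∈ L, (L ∩ Metric.ball z R₀).Finite := fun z hz =>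
    ((hcount r₁ hr₁r₀ z hz).1).subset
      (Set.inter_subset_inter_right _ (Metric.ball_subset_ball hr₁R₀))
  have part1 : ∀ x ∈ L, ∀ z ∈ L,
      Summable (fun z' : ↥(L ∩ Metric.ball z R₀) =>
        (1 + dist x (z' : EuclideanSpace ℝ (Fin d))) ^ (-lam)) := by
    intro x hx z hz
    haveI := (hfinS z hz).to_subtype
    exact Summable.of_finite
  set K₁ : ℝ := (C * r₁ ^ γ) * (1 + R₀) ^ lam with hK₁
  have hK₁0 : 0 ≤ K₁ := by
    have : 0 < r₁ := lt_of_lt_of_le hr₀ hr₁r₀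
    positivity
  -- bound on the inner tsum
  have hT : ∀ x ∈ L, ∀ z ∈ L,
      (∑' z' : ↥(L ∩ Metric.ball z R₀),
        (1 + dist x (z' : EuclideanSpace ℝ (Fin d))) ^ (-lam))
        ≤ K₁ * (1 + dist x z) ^ (-lam) := by
    intro x hx z hz
    refine Summable.tsum_le_of_sum_le (part1 x hx z hz) (fun u => ?_)
    have hterm : ∀ z' ∈ u, (1 + dist x (z' : EuclideanSpace ℝ (Fin d))) ^ (-lam)
        ≤ (1 + R₀) ^ lam * (1 + dist x z) ^ (-lam) := by
      intro z' _
      have hz'b : dist (z' : EuclideanSpace ℝ (Fin d)) z < R₀ := z'.2.2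
      have hle : 1 + dist x z ≤ (1 + R₀) * (1 + dist x (z' : EuclideanSpace ℝ (Fin d))) := by
        have h1 : dist x z ≤ dist x (z' : EuclideanSpace ℝ (Fin d)) + dist (z' : EuclideanSpace ℝ (Fin d)) z :=
          dist_triangle _ _ _
        nlinarith [dist_nonneg (x := x) (y := (z' : EuclideanSpace ℝ (Fin d))), hR₀.le]
      have hA : (0:ℝ) < (1 + dist x z) ^ lam := by
        have : (0:ℝ) < 1 + dist x z := by linarith [dist_nonneg (x := x) (y := z)]
        positivity
      have hA' : (0:ℝ) < (1 + dist x (z' : EuclideanSpace ℝ (Fin d))) ^ lam := by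
        have : (0:ℝ) < 1 + dist x (z' : EuclideanSpace ℝ (Fin d)) := by
          linarith [dist_nonneg (x := x) (y := (z' : EuclideanSpace ℝ (Fin d)))]
        positivity
      have hAB : (1 + dist x z) ^ lam
          ≤ (1 + R₀) ^ lam * (1 + dist x (z' : EuclideanSpace ℝ (Fin d))) ^ lam := by
        rw [← mul_rpow (by linarith) (by positivity)]
        exact rpow_le_rpow (by positivity) hle hlam0.le
      rw [rpow_neg (by positivity), rpow_neg (by positivity),
        show (1 + R₀) ^ lam * ((1 + dist x z) ^ lam)⁻¹ = (1 + R₀) ^ lam / (1 + dist x z) ^ lam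
          from (div_eq_mul_inv _ _).symm, inv_eq_one_div, div_le_div_iff₀ hA' hA]
      nlinarith
    calc ∑ z' ∈ u, (1 + dist x (z' : EuclideanSpace ℝ (Fin d))) ^ (-lam)
        ≤ u.card • ((1 + R₀) ^ lam * (1 + dist x z) ^ (-lam)) :=
          Finset.sum_le_card_nsmul _ _ _ hterm
      _ = (u.card : ℝ) * ((1 + R₀) ^ lam * (1 + dist x z) ^ (-lam)) := by rw [nsmul_eq_mul]
      _ ≤ (C * r₁ ^ γ) * ((1 + R₀) ^ lam * (1 + dist x z) ^ (-lam)) := by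
          refine mul_le_mul_of_nonneg_right ?_ (by positivity)
          obtain ⟨hfin, hnc⟩ := hcount r₁ hr₁r₀ z hz
          have hsub : ((u.image (Subtype.val)) : Set (EuclideanSpace ℝ (Fin d)))
              ⊆ L ∩ Metric.ball z r₁ := by
            intro y hy
            simp only [Finset.coe_image, Set.mem_image, Finset.mem_coe] at hy
            obtain ⟨z', _, rfl⟩ := hy
            exact ⟨z'.2.1, Metric.ball_subset_ball hr₁R₀ z'.2.2⟩
          have h1 : u.card = (u.image (Subtype.val)).card :=
            (Finset.card_image_of_injective _ Subtype.val_injective).symm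
          have h2 : ((u.image (Subtype.val) : Set (EuclideanSpace ℝ (Fin d))).ncard)
              ≤ (L ∩ Metric.ball z r₁).ncard := Set.ncard_le_ncard hsub hfin
          rw [Set.ncard_coe_finset] at h2
          calc (u.card : ℝ) ≤ ((L ∩ Metric.ball z r₁).ncard : ℝ) := by
                rw [h1]; exact_mod_cast h2
            _ ≤ C * r₁ ^ γ := hnc
      _ = K₁ * (1 + dist x z) ^ (-lam) := by rw [hK₁]; ring
  -- the termwise bound for the outer sum
  set μ : ℝ := lam / 2 - (k + 1) with hμdef
  have hμ : γ + 1 < μ := by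
    rw [hμdef]; push_cast; linarith
  set K₂ : ℝ := K₁ ^ ((1:ℝ)/2) with hK₂
  have hK₂0 : 0 ≤ K₂ := rpow_nonneg hK₁0 _
  set F : EuclideanSpace ℝ (Fin d) → L → ℝ := fun x z =>
      (∑' z' : ↥(L ∩ Metric.ball (z : EuclideanSpace ℝ (Fin d)) R₀),
          (1 + dist x (z' : EuclideanSpace ℝ (Fin d))) ^ (-lam)) ^ ((1 : ℝ) / 2) *
        dist x (z : EuclideanSpace ℝ (Fin d)) ^ (k + 1) with hF
  have hFnonneg : ∀ x, ∀ z : L, 0 ≤ F x z := by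
    intro x z
    have h0 : (0:ℝ) ≤ ∑' z' : ↥(L ∩ Metric.ball (z : EuclideanSpace ℝ (Fin d)) R₀),
        (1 + dist x (z' : EuclideanSpace ℝ (Fin d))) ^ (-lam) :=
      tsum_nonneg (fun z' => by positivity)
    exact mul_nonneg (rpow_nonneg h0 _) (by positivity)
  have hFle : ∀ x ∈ L, ∀ z : L, F x z ≤ K₂ * (1 + dist x (z : EuclideanSpace ℝ (Fin d))) ^ (-μ) := by
    intro x hx z
    have hd0 : (0:ℝ) ≤ dist x (z : EuclideanSpace ℝ (Fin d)) := dist_nonneg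
    have hb : (0:ℝ) < 1 + dist x (z : EuclideanSpace ℝ (Fin d)) := by linarith
    have h0 : (0:ℝ) ≤ ∑' z' : ↥(L ∩ Metric.ball (z : EuclideanSpace ℝ (Fin d)) R₀),
        (1 + dist x (z' : EuclideanSpace ℝ (Fin d))) ^ (-lam) :=
      tsum_nonneg (fun z' => by positivity)
    have hsqrt : (∑' z' : ↥(L ∩ Metric.ball (z : EuclideanSpace ℝ (Fin d)) R₀),
          (1 + dist x (z' : EuclideanSpace ℝ (Fin d))) ^ (-lam)) ^ ((1:ℝ)/2)
        ≤ K₂ * (1 + dist x (z : EuclideanSpace ℝ (Fin d))) ^ (-(lam/2)) := by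
      calc (∑' z' : ↥(L ∩ Metric.ball (z : EuclideanSpace ℝ (Fin d)) R₀),
            (1 + dist x (z' : EuclideanSpace ℝ (Fin d))) ^ (-lam)) ^ ((1:ℝ)/2)
          ≤ (K₁ * (1 + dist x (z : EuclideanSpace ℝ (Fin d))) ^ (-lam)) ^ ((1:ℝ)/2) :=
            rpow_le_rpow h0 (hT x hx (z : EuclideanSpace ℝ (Fin d)) z.2) (by norm_num)
        _ = K₂ * (1 + dist x (z : EuclideanSpace ℝ (Fin d))) ^ (-(lam/2)) := by
            rw [mul_rpow hK₁0 (by positivity), ← Real.rpow_mul hb.le, hK₂]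
            congr 1
            ring
    calc F x z ≤ (K₂ * (1 + dist x (z : EuclideanSpace ℝ (Fin d))) ^ (-(lam/2))) *
          (1 + dist x (z : EuclideanSpace ℝ (Fin d))) ^ (((k:ℝ)) + 1) := by
          refine mul_le_mul hsqrt ?_ (by positivity) ?_
          · rw [show ((k:ℝ) + 1) = ((k + 1 : ℕ) : ℝ) by push_cast; ring, rpow_natCast]
            exact pow_le_pow_left₀ hd0 (by linarith) _
          · positivity
      _ = K₂ * (1 + dist x (z : EuclideanSpace ℝ (Fin d))) ^ (-μ) := by
          rw [mul_assoc, ← rpow_add hb, hμdef]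
          ring_nf
  obtain ⟨M₀, hM₀⟩ := uniform_decay_sum L C γ r₀ hC hγ hr₀ hcount μ hμ
  have hkey : ∀ x ∈ L, ∀ u : Finset L, ∑ z ∈ u, F x z ≤ K₂ * M₀ := by
    intro x hx u
    calc ∑ z ∈ u, F x z
        ≤ ∑ z ∈ u, K₂ * (1 + dist x (z : EuclideanSpace ℝ (Fin d))) ^ (-μ) :=
          Finset.sum_le_sum (fun z _ => hFle x hx z)
      _ = K₂ * ∑ z ∈ u, (1 + dist x (z : EuclideanSpace ℝ (Fin d))) ^ (-μ) := by
          rw [Finset.mul_sum]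
      _ ≤ K₂ * M₀ := mul_le_mul_of_nonneg_left (hM₀ x hx u) hK₂0
  refine ⟨part1, fun x hx => summable_of_sum_le (fun z => hFnonneg x z) (hkey x hx),
    ⟨K₂ * M₀, fun x hx => Summable.tsum_le_of_sum_le
      (summable_of_sum_le (fun z => hFnonneg x z) (hkey x hx)) (hkey x hx)⟩⟩
end
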